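/- arXiv:1010.3455 — 4 statements merged into one kernel-verified Lean document; each statement's English description precedes it below -/
import Mathlib

section
/- Let K be a field and M a finite J-trivial monoid with set of idempotents E(M). Let (f_e)_{e ∈ E(M)} be any family of elements of MonoidAlgebra K M such that: (i) Σ_e f_e = 1 and f_e f_{e'} = δ_{e,e'} f_e; (ii) f_e − g_e ∈ rad(MonoidAlgebra K M), where (g_e) is the unique family in the K-span of E(M) with e = Σ_{e' ∈ E(M), e' ≤_J e} g_{e'} for all e ∈ E(M); (iii) f_e − e lies in the K-span of {x ∈ M : x <_J e}. Then for all idempotents i, j ∈ E(M), the K-dimension of the subspace f_i · (MonoidAlgebra K M) · f_j equals the cardinality of the set {x ∈ M : lfix(x) = i and rfix(x) = j}. -/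
/-- The `J`-preorder on a monoid: `x ≤_J y` iff `x = u * y * v` for some `u, v`. -/
def leJ {M : Type*} [Monoid M] (x y : M) : Prop := ∃ u v : M, x = u * y * v

/-- A monoid is `J`-trivial if `M x M = M y M` implies `x = y`. -/
def JTrivial (M : Type*) [Monoid M] : Prop :=
  ∀ x y : M, {z : M | ∃ u v : M, z = u * x * v} = {z : M | ∃ u v : M, z = u * y * v} → x = y

open Classical

/-- `lfix x`: the `≤_J`-minimum of the idempotents `e` with `e * x = x`
(it exists in a finite `J`-trivial monoid). -/
noncomputable def lfixF {M : Type*} [Monoid M] (x : M) : M :=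
  if h : ∃ e : M, (IsIdempotentElem e ∧ e * x = x) ∧
      ∀ f : M, IsIdempotentElem f → f * x = x → leJ e f
  then h.choose else 1

/-- `rfix x`: the `≤_J`-minimum of the idempotents `e` with `x * e = x`
(it exists in a finite `J`-trivial monoid). -/
noncomputable def rfixF {M : Type*} [Monoid M] (x : M) : M :=
  if h : ∃ e : M, (IsIdempotentElem e ∧ x * e = x) ∧
      ∀ f : M, IsIdempotentElem f → x * f = x → leJ e f
  then h.choose else 1


section Aux
variable {M : Type*} [Monoid M]

lemma leJ_refl (x : M) : leJ x x := ⟨1, 1, by simp⟩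

lemma leJ_trans {x y z : M} (h1 : leJ x y) (h2 : leJ y z) : leJ x z := by
  obtain ⟨u, v, rfl⟩ := h1; obtain ⟨p, q, rfl⟩ := h2
  exact ⟨u * p, q * v, by simp [mul_assoc]⟩

lemma leJ_antisymm (hJ : JTrivial M) {x y : M} (h1 : leJ x y) (h2 : leJ y x) : x = y := by
  obtain ⟨u, v, hx⟩ := h1; obtain ⟨p, q, hy⟩ := h2
  apply hJ; ext z
  constructor
  · rintro ⟨a, b, rfl⟩
    exact ⟨a * u, v * b, by rw [hx]; simp [mul_assoc]⟩
  · rintro ⟨a, b, rfl⟩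
    exact ⟨a * p, q * b, by rw [hy]; simp [mul_assoc]⟩

variable [Fintype M]

open Classical in
/-- number of elements strictly `J`-below `x`. -/
noncomputable def Jm (x : M) : ℕ := (Finset.univ.filter (fun y => leJ y x ∧ y ≠ x)).card

lemma Jm_lt (hJ : JTrivial M) {y x : M} (h : leJ y x) (hne : y ≠ x) : Jm y < Jm x := by
  classical
  unfold Jm
  apply Finset.card_lt_card
  rw [Finset.ssubset_iff_of_subset]
  · refine ⟨y, by simp [h, hne], by simp⟩
  · intro z hz
    simp only [Finset.mem_filter, Finset.mem_univ, true_and] at hz ⊢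
    refine ⟨leJ_trans hz.1 h, fun hzx => ?_⟩
    subst hzx
    exact hne (leJ_antisymm hJ h hz.1)

lemma exists_pow_idem (a : M) : ∃ n : ℕ, 0 < n ∧ IsIdempotentElem (a ^ n) := by
  obtain ⟨i, j, hij, h⟩ := Finite.exists_ne_map_eq_of_infinite (fun n : ℕ => a ^ (n + 1))
  wlog hlt : i < j generalizing i j
  · exact this j i hij.symm h.symm (by omega)
  set p := j - i with hp
  have hp0 : 0 < p := by omega
  have key : ∀ m, i + 1 ≤ m → a ^ (m + p) = a ^ m := by
    intro m hm
    have : m + p = (j + 1) + (m - (i+1)) := by omega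
    rw [this, pow_add, ← h, ← pow_add]
    congr 1
    omega
  have key2 : ∀ k m, i + 1 ≤ m → a ^ (m + k * p) = a ^ m := by
    intro k
    induction k with
    | zero => simp
    | succ k ih =>
      intro m hm
      have : m + (k+1) * p = (m + p) + k * p := by ring
      rw [this, ih _ (by omega), key m hm]
  refine ⟨(i + 1) * p, by positivity, ?_⟩
  unfold IsIdempotentElem
  rw [← pow_add]
  have h1 : i + 1 ≤ (i+1) * p := Nat.le_mul_of_pos_right _ hp0
  have : (i+1) * p + (i+1) * p = (i+1)*p + (i+1) * p := rfl
  exact key2 (i+1) ((i+1)*p) h1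

lemma exists_fix {u x v : M} (h : u * x * v = x) :
    (∃ e : M, IsIdempotentElem e ∧ e * x = x ∧ leJ e u) ∧
    (∃ g : M, IsIdempotentElem g ∧ x * g = x ∧ leJ g v) := by
  have hn : ∀ n : ℕ, u ^ n * x * v ^ n = x := by
    intro n
    induction n with
    | zero => simp
    | succ n ih =>
      have h2 : u * (u ^ n * x * v ^ n) * v = x := by rw [ih, h]
      calc u ^ (n+1) * x * v ^ (n+1) = u * (u ^ n * x * v ^ n) * v := by
            simp only [pow_succ', pow_succ, mul_assoc, pow_mul_comm']
        _ = x := h2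
  obtain ⟨n, hn0, hni⟩ := exists_pow_idem u
  obtain ⟨m, hm0, hmi⟩ := exists_pow_idem v
  set N := n * m with hN
  have hN0 : 0 < N := by positivity
  have heI : IsIdempotentElem (u ^ N) := by
    rw [hN, pow_mul]; exact hni.pow m
  have hgI : IsIdempotentElem (v ^ N) := by
    rw [hN, mul_comm, pow_mul]; exact hmi.pow n
  have hfix := hn N
  constructor
  · refine ⟨u ^ N, heI, ?_, ⟨u ^ (N - 1), 1, by rw [mul_one, ← pow_succ, Nat.sub_add_cancel hN0]⟩⟩
    calc u ^ N * x = u ^ N * (u ^ N * x * v ^ N) := by rw [hfix]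
      _ = (u ^ N * u ^ N) * x * v ^ N := by simp [mul_assoc]
      _ = u ^ N * x * v ^ N := by rw [heI]
      _ = x := hfix
  · refine ⟨v ^ N, hgI, ?_, ⟨1, v ^ (N - 1), by rw [one_mul, ← pow_succ', Nat.sub_add_cancel hN0]⟩⟩
    calc x * v ^ N = (u ^ N * x * v ^ N) * v ^ N := by rw [hfix]
      _ = u ^ N * x * (v ^ N * v ^ N) := by simp [mul_assoc]
      _ = u ^ N * x * v ^ N := by rw [hgI]
      _ = x := hfix

lemma exists_lfix (hJ : JTrivial M) (x : M) :
    ∃ e : M, (IsIdempotentElem e ∧ e * x = x) ∧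
      ∀ f : M, IsIdempotentElem f → f * x = x → leJ e f := by
  classical
  obtain ⟨e, he, hmin⟩ := Finset.exists_min_image
    (Finset.univ.filter (fun e : M => IsIdempotentElem e ∧ e * x = x)) Jm
    ⟨1, by simp only [Finset.mem_filter, Finset.mem_univ, true_and]; simp [IsIdempotentElem]⟩
  simp only [Finset.mem_filter, Finset.mem_univ, true_and] at he
  refine ⟨e, he, fun f hf hfx => ?_⟩
  have hax : (e * f) * x * 1 = x := by
    rw [mul_one, mul_assoc, hfx, he.2]
  obtain ⟨⟨e', he'I, he'x, he'le⟩, -⟩ := exists_fix hax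
  have hle : leJ e' e := leJ_trans he'le ⟨1, f, by simp [mul_assoc]⟩
  have hee : e' = e := by
    by_contra hne
    have := Jm_lt hJ hle hne
    have := hmin e' (by simp [he'I, he'x])
    omega
  have : leJ e (e * f) := hee ▸ he'le
  exact leJ_trans this ⟨e, 1, by simp⟩

lemma exists_rfix (hJ : JTrivial M) (x : M) :
    ∃ e : M, (IsIdempotentElem e ∧ x * e = x) ∧
      ∀ f : M, IsIdempotentElem f → x * f = x → leJ e f := by
  classical
  obtain ⟨e, he, hmin⟩ := Finset.exists_min_image
    (Finset.univ.filter (fun e : M => IsIdempotentElem e ∧ x * e = x)) Jm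
    ⟨1, by simp only [Finset.mem_filter, Finset.mem_univ, true_and]; simp [IsIdempotentElem]⟩
  simp only [Finset.mem_filter, Finset.mem_univ, true_and] at he
  refine ⟨e, he, fun f hf hfx => ?_⟩
  have hax : (1 : M) * x * (f * e) = x := by
    rw [one_mul, ← mul_assoc, hfx, he.2]
  obtain ⟨-, ⟨e', he'I, he'x, he'le⟩⟩ := exists_fix hax
  have hle : leJ e' e := leJ_trans he'le ⟨f, 1, by simp [mul_assoc]⟩
  have hee : e' = e := by
    by_contra hne
    have := Jm_lt hJ hle hne
    have := hmin e' (by simp [he'I, he'x])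
    omega
  have : leJ e (f * e) := hee ▸ he'le
  exact leJ_trans this ⟨1, e, by simp [mul_assoc]⟩

end Aux

open Pointwise

section Alg
variable (K : Type*) [Field K] {M : Type*} [Monoid M]

lemma mem_span_mul {A B : Set M} {a b : MonoidAlgebra K M}
    (ha : a ∈ Submodule.span K ((fun z : M => (MonoidAlgebra.of K M z : MonoidAlgebra K M)) '' A))
    (hb : b ∈ Submodule.span K ((fun z : M => (MonoidAlgebra.of K M z : MonoidAlgebra K M)) '' B)) :
    a * b ∈ Submodule.span K
      ((fun z : M => (MonoidAlgebra.of K M z : MonoidAlgebra K M)) '' (A * B)) := by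
  have h := Submodule.mul_mem_mul ha hb
  rwa [Submodule.span_mul_span, ← Set.image_mul (MonoidAlgebra.of K M)] at h

lemma span_of_top [Fintype M] :
    Submodule.span K (Set.range (fun z : M => (MonoidAlgebra.of K M z : MonoidAlgebra K M))) = ⊤ := by
  have : (fun z : M => (MonoidAlgebra.of K M z : MonoidAlgebra K M))
      = fun z : M => MonoidAlgebra.single z (1 : K) := rfl
  rw [this]
  exact (MonoidAlgebra.basis M K).span_eq

lemma card_eq_finrank [Fintype M] :
    Fintype.card M = Module.finrank K (MonoidAlgebra K M) :=
  (Module.finrank_eq_card_basis (MonoidAlgebra.basis M K)).symm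

end Alg

/-- The Cartan matrix of a finite `J`-trivial monoid: for any uni-triangular decomposition
`(f_e)` of the identity of `K[M]` into orthogonal idempotents compatible with the semi-simple
quotient, `dim_K (f_i · K[M] · f_j)` equals the number of elements `x ∈ M` with `lfix x = i`
and `rfix x = j`. -/
theorem cartan_matrix_count (K : Type*) [Field K] {M : Type*} [Monoid M] [Fintype M]
    (hJ : JTrivial M)
    (g : {e : M // IsIdempotentElem e} → MonoidAlgebra K M)
    (hgspan : ∀ e : {e : M // IsIdempotentElem e},
      g e ∈ Submodule.span K
        ((fun z : M => (MonoidAlgebra.of K M z : MonoidAlgebra K M)) ''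
          {z : M | IsIdempotentElem z}))
    (hg : ∀ e : {e : M // IsIdempotentElem e},
      (MonoidAlgebra.of K M (e : M) : MonoidAlgebra K M)
        = ∑ e' ∈ Finset.univ.filter
            (fun e' : {e : M // IsIdempotentElem e} => leJ (e' : M) (e : M)), g e')
    (f : {e : M // IsIdempotentElem e} → MonoidAlgebra K M)
    (hf1 : (∑ e : {e : M // IsIdempotentElem e}, f e) = 1)
    (hf2 : ∀ e e' : {e : M // IsIdempotentElem e},
      f e * f e' = if e = e' then f e else 0)
    (hf3 : ∀ e : {e : M // IsIdempotentElem e},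
      f e - g e ∈ Ideal.jacobson (⊥ : Ideal (MonoidAlgebra K M)))
    (hf4 : ∀ e : {e : M // IsIdempotentElem e},
      f e - MonoidAlgebra.of K M (e : M) ∈
        Submodule.span K
          ((fun z : M => (MonoidAlgebra.of K M z : MonoidAlgebra K M)) ''
            {x : M | leJ x (e : M) ∧ x ≠ (e : M)})) :
    ∀ i j : {e : M // IsIdempotentElem e},
      Module.finrank K
        (LinearMap.range
          ((LinearMap.mulRight K (f j)).comp (LinearMap.mulLeft K (f i))))
        = Nat.card {x : M // lfixF x = (i : M) ∧ rfixF x = (j : M)} := by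
  classical
  intro i j
  set φ : M → MonoidAlgebra K M := fun z => (MonoidAlgebra.of K M z : MonoidAlgebra K M) with hφ
  have hφmul : ∀ a c : M, φ a * φ c = φ (a * c) :=
    fun a c => (map_mul (MonoidAlgebra.of K M) a c).symm
  have hlspec : ∀ x : M, (IsIdempotentElem (lfixF x) ∧ lfixF x * x = x) ∧
      ∀ e : M, IsIdempotentElem e → e * x = x → leJ (lfixF x) e := by
    intro x
    have hex := exists_lfix hJ x
    simp only [lfixF]
    rw [dif_pos hex]
    exact hex.choose_spec
  have hrspec : ∀ x : M, (IsIdempotentElem (rfixF x) ∧ x * rfixF x = x) ∧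
      ∀ e : M, IsIdempotentElem e → x * e = x → leJ (rfixF x) e := by
    intro x
    have hex := exists_rfix hJ x
    simp only [rfixF]
    rw [dif_pos hex]
    exact hex.choose_spec
  set iL : M → {e : M // IsIdempotentElem e} := fun x => ⟨lfixF x, (hlspec x).1.1⟩ with hiL
  set jR : M → {e : M // IsIdempotentElem e} := fun x => ⟨rfixF x, (hrspec x).1.1⟩ with hjR
  set b : M → MonoidAlgebra K M := fun x => f (iL x) * φ x * f (jR x) with hb
  -- triangularity
  have htri : ∀ x : M, b x - φ x ∈ Submodule.span K (φ '' {y | leJ y x ∧ y ≠ x}) := by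
    intro x
    have h1 : φ (lfixF x) * φ x = φ x := by rw [hφmul, (hlspec x).1.2]
    have h2 : φ x * φ (rfixF x) = φ x := by rw [hφmul, (hrspec x).1.2]
    have hsplit : b x - φ x
        = (f (iL x) - φ (lfixF x)) * (φ x * f (jR x))
          + φ x * (f (jR x) - φ (rfixF x)) := by
      rw [sub_mul, mul_sub, ← mul_assoc (φ (lfixF x)) (φ x) (f (jR x)), h1, h2]
      simp only [hb]
      rw [mul_assoc (f (iL x))]
      abel
    rw [hsplit]
    refine Submodule.add_mem _ ?_ ?_
    · have ha : f (iL x) - φ (lfixF x)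
          ∈ Submodule.span K (φ '' {y | leJ y (lfixF x) ∧ y ≠ lfixF x}) := hf4 (iL x)
      have hXc : φ x * f (jR x)
          ∈ Submodule.span K (φ '' ({x} * {y | leJ y (rfixF x)})) := by
        apply mem_span_mul K
        · exact Submodule.subset_span ⟨x, rfl, rfl⟩
        · have hq : φ (rfixF x) ∈ Submodule.span K (φ '' {y | leJ y (rfixF x)}) :=
            Submodule.subset_span ⟨rfixF x, leJ_refl _, rfl⟩
          have hs : f (jR x) - φ (rfixF x)
              ∈ Submodule.span K (φ '' {y | leJ y (rfixF x)}) :=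
            Submodule.span_mono (Set.image_mono (fun y hy => hy.1)) (hf4 (jR x))
          have := Submodule.add_mem _ hq hs
          rwa [add_sub_cancel] at this
      have hmem := mem_span_mul K ha hXc
      refine Submodule.span_mono (Set.image_mono ?_) hmem
      rintro z hz
      obtain ⟨p, hp, w, hw, rfl⟩ := hz
      obtain ⟨x', hx', q, hq, rfl⟩ := hw
      obtain rfl : x = x' := Eq.symm hx'
      refine ⟨⟨p, q, by rw [mul_assoc]⟩, fun hcon => ?_⟩
      have hpxq : p * x * q = x := by rw [mul_assoc]; exact hcon
      obtain ⟨⟨e, heI, hex, hele⟩, -⟩ := exists_fix hpxq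
      have h5 : leJ (lfixF x) p := leJ_trans ((hlspec x).2 e heI hex) hele
      exact hp.2 (leJ_antisymm hJ hp.1 h5)
    · have hX : φ x ∈ Submodule.span K (φ '' {x}) := Submodule.subset_span ⟨x, rfl, rfl⟩
      have hmem := mem_span_mul K hX (hf4 (jR x))
      refine Submodule.span_mono (Set.image_mono ?_) hmem
      rintro z hz
      obtain ⟨x', hx', q, hq, rfl⟩ := hz
      obtain rfl : x = x' := Eq.symm hx'
      refine ⟨⟨1, q, by simp⟩, fun hcon => ?_⟩
      have hxq : (1 : M) * x * q = x := by simpa using hcon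
      obtain ⟨-, g', hgI, hgx, hgle⟩ := exists_fix hxq
      have h5 : leJ (rfixF x) q := leJ_trans ((hrspec x).2 g' hgI hgx) hgle
      exact hq.2 (leJ_antisymm hJ hq.1 h5)
  -- b spans
  have hspanN : ∀ n : ℕ, ∀ x : M, Jm x < n → φ x ∈ Submodule.span K (Set.range b) := by
    intro n
    induction n with
    | zero => intro x h; omega
    | succ n ih =>
      intro x hx
      have hsub : Submodule.span K (φ '' {y | leJ y x ∧ y ≠ x})
          ≤ Submodule.span K (Set.range b) := by
        rw [Submodule.span_le]
        rintro _ ⟨y, hy, rfl⟩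
        exact ih y (by have := Jm_lt hJ hy.1 hy.2; omega)
      have hxe : φ x = b x - (b x - φ x) := by abel
      rw [hxe]
      exact sub_mem (Submodule.subset_span ⟨x, rfl⟩) (hsub (htri x))
  have hspan : ⊤ ≤ Submodule.span K (Set.range b) := by
    rw [← span_of_top K (M := M), Submodule.span_le]
    rintro _ ⟨x, rfl⟩
    exact hspanN (Jm x + 1) x (by omega)
  have hcard : Fintype.card M = Module.finrank K (MonoidAlgebra K M) := card_eq_finrank K
  set B : Module.Basis M K (MonoidAlgebra K M) := basisOfTopLeSpanOfCardEqFinrank b hspan hcard with hB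
  have hBcoe : ⇑B = b := coe_basisOfTopLeSpanOfCardEqFinrank b hspan hcard
  set P := (LinearMap.mulRight K (f j)).comp (LinearMap.mulLeft K (f i)) with hP
  have hPapp : ∀ a : MonoidAlgebra K M, P a = f i * a * f j := fun a => rfl
  have hPb : ∀ x : M,
      P (b x) = if lfixF x = (i : M) ∧ rfixF x = (j : M) then b x else 0 := by
    intro x
    have hassoc : P (b x) = (f i * f (iL x)) * (φ x * (f (jR x) * f j)) := by
      rw [hPapp]
      simp only [hb]
      simp only [mul_assoc]
    rw [hassoc, hf2 i (iL x), hf2 (jR x) j]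
    by_cases h1 : lfixF x = (i : M)
    · have e1 : i = iL x := Subtype.ext h1.symm
      by_cases h2 : rfixF x = (j : M)
      · have e2 : jR x = j := Subtype.ext h2
        rw [if_pos e1, if_pos e2, if_pos ⟨h1, h2⟩, e1]
        simp only [hb]
        simp only [mul_assoc]
      · have e2 : ¬ jR x = j := fun hc => h2 (congrArg Subtype.val hc)
        rw [if_pos e1, if_neg e2,
          if_neg (show ¬(lfixF x = (i : M) ∧ rfixF x = (j : M)) from fun hc => h2 hc.2)]
        simp
    · have e1 : ¬ i = iL x := fun hc => h1 (congrArg Subtype.val hc).symm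
      rw [if_neg e1,
        if_neg (show ¬(lfixF x = (i : M) ∧ rfixF x = (j : M)) from fun hc => h1 hc.1)]
      simp
  set S : Set M := {x : M | lfixF x = (i : M) ∧ rfixF x = (j : M)} with hS
  have hrange : LinearMap.range P = Submodule.span K (b '' S) := by
    apply le_antisymm
    · rintro a ⟨c, rfl⟩
      have hc : c = ∑ x : M, B.repr c x • b x := by
        rw [← hBcoe]
        exact (B.sum_repr c).symm
      rw [hc, map_sum]
      apply Submodule.sum_mem
      intro x _
      rw [map_smul, hPb x]
      by_cases hmem : lfixF x = (i : M) ∧ rfixF x = (j : M)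
      · rw [if_pos hmem]
        exact Submodule.smul_mem _ _ (Submodule.subset_span ⟨x, hmem, rfl⟩)
      · rw [if_neg hmem]
        simp
    · rw [Submodule.span_le]
      rintro _ ⟨x, hx, rfl⟩
      exact ⟨b x, by rw [hPb x, if_pos (show lfixF x = (i : M) ∧ rfixF x = (j : M) from hx)]⟩
  have hli : LinearIndependent K
      (fun s : {x : M // lfixF x = (i : M) ∧ rfixF x = (j : M)} => b (s : M)) := by
    have h := B.linearIndependent
    rw [hBcoe] at h
    exact h.comp _ Subtype.val_injective
  have hr : (Set.range fun s : {x : M // lfixF x = (i : M) ∧ rfixF x = (j : M)} => b (s : M))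
      = b '' S := by
    rw [show (fun s : {x : M // lfixF x = (i : M) ∧ rfixF x = (j : M)} => b (s : M))
        = b ∘ Subtype.val from rfl, Set.range_comp, Subtype.range_coe_subtype]
  rw [hrange, ← hr, finrank_span_eq_card hli, Nat.card_eq_fintype_card]
end

section
/- Let P be a finite poset. (1) Let I ⊆ P be a subset that contains all minimal elements of P and is stable under joins (for every S ⊆ I, every join of S belongs to I). Then for every x ∈ P the set {y ∈ I : y ≤ x} has a greatest element, denoted sup_I(x), and the map sup_I : P → P is an idempotent element of OR(P). (2) Conversely, if f ∈ OR(P) is idempotent, then its image I := im(f) contains all minimal elements of P, is stable under joins, every element of I is a fixed point of f, and f(x) = sup_I(x) for all x ∈ P. Hence the idempotents of OR(P) are exactly the maps sup_I, for I ranging over the subsets of P containing all minimal elements and stable under joins. -/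
/-- `z` is a join of `S`: a minimal element among the common upper bounds of `S`.
In particular, the joins of the empty set are the minimal elements of the poset. -/
def IsJoinOf {P : Type*} [PartialOrder P] (S : Set P) (z : P) : Prop :=
  (∀ x ∈ S, x ≤ z) ∧ ∀ w : P, (∀ x ∈ S, x ≤ w) → w ≤ z → w = z

private lemma exists_min_mem {P : Type*} [PartialOrder P] [Fintype P] (s : Set P)
    (h : s.Nonempty) : ∃ m ∈ s, ∀ x ∈ s, x ≤ m → x = m := by
  classical
  obtain ⟨m, hm, hmin⟩ := s.toFinset.exists_minimal (by simpa using h)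
  refine ⟨m, by simpa using hm, fun x hx hxm => ?_⟩
  by_contra hne
  exact hne (le_antisymm hxm (hmin (by simpa using hx) hxm))


/-- Characterization of the idempotents of the monoid `OR(P)` of order preserving regressive
functions on a finite poset `P`:
(1) if `I ⊆ P` contains all minimal elements and is stable under joins, then for every `x`
the set `{y ∈ I | y ≤ x}` has a greatest element `sup_I(x)`, and `sup_I` is an idempotent,
order preserving and regressive function;
(2) conversely, the image of any idempotent `f ∈ OR(P)` contains all minimal elements, is
stable under joins, consists of fixed points of `f`, and `f x` is the greatest element of
`{y ∈ im f | y ≤ x}` for all `x`. -/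
theorem idempotents_of_OR {P : Type*} [PartialOrder P] [Fintype P] :
    (∀ I : Set P,
      (∀ x : P, IsMin x → x ∈ I) →
      (∀ S : Set P, S ⊆ I → ∀ z : P, IsJoinOf S z → z ∈ I) →
      ∃ g : P → P,
        (∀ x : P, g x ∈ I ∧ g x ≤ x ∧ ∀ y ∈ I, y ≤ x → y ≤ g x) ∧
        Monotone g ∧ (∀ x : P, g x ≤ x) ∧ g ∘ g = g) ∧
    (∀ f : P → P, Monotone f → (∀ x : P, f x ≤ x) → f ∘ f = f →
      (∀ x : P, IsMin x → x ∈ Set.range f) ∧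
      (∀ S : Set P, S ⊆ Set.range f → ∀ z : P, IsJoinOf S z → z ∈ Set.range f) ∧
      (∀ y ∈ Set.range f, f y = y) ∧
      (∀ x : P, f x ∈ Set.range f ∧ f x ≤ x ∧ ∀ y ∈ Set.range f, y ≤ x → y ≤ f x)) := by
  constructor
  · intro I hmin hstab
    have key : ∀ x : P, ∃ z : P, z ∈ I ∧ z ≤ x ∧ ∀ y ∈ I, y ≤ x → y ≤ z := by
      intro x
      set S : Set P := {y | y ∈ I ∧ y ≤ x} with hS
      set U : Set P := {z | (∀ y ∈ S, y ≤ z) ∧ z ≤ x} with hU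
      have hxU : x ∈ U := ⟨fun y hy => hy.2, le_rfl⟩
      obtain ⟨z, hzU, hzmin⟩ := exists_min_mem U ⟨x, hxU⟩
      have hjoin : IsJoinOf S z := by
        refine ⟨hzU.1, fun w hw hwz => ?_⟩
        exact hzmin w ⟨hw, le_trans hwz hzU.2⟩ hwz
      have hzI : z ∈ I := hstab S (fun y hy => hy.1) z hjoin
      exact ⟨z, hzI, hzU.2, fun y hyI hyx => hzU.1 y ⟨hyI, hyx⟩⟩
    choose g hg1 hg2 hg3 using key
    refine ⟨g, fun x => ⟨hg1 x, hg2 x, hg3 x⟩, ?_, hg2, ?_⟩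
    · intro a b hab
      exact hg3 b (g a) (hg1 a) (le_trans (hg2 a) hab)
    · funext x
      exact le_antisymm (hg2 (g x)) (hg3 (g x) (g x) (hg1 x) le_rfl)
  · intro f hmono hreg hidem
    have hfix : ∀ y ∈ Set.range f, f y = y := by
      rintro y ⟨a, rfl⟩
      exact congrFun hidem a
    have hgreat : ∀ x : P, f x ∈ Set.range f ∧ f x ≤ x ∧
        ∀ y ∈ Set.range f, y ≤ x → y ≤ f x := by
      intro x
      refine ⟨⟨x, rfl⟩, hreg x, fun y hy hyx => ?_⟩
      calc y = f y := (hfix y hy).symm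
        _ ≤ f x := hmono hyx
    refine ⟨fun x hx => ⟨x, le_antisymm (hreg x) (hx (hreg x))⟩, ?_, hfix, hgreat⟩
    intro S hS z hz
    have hub : ∀ y ∈ S, y ≤ f z := fun y hy =>
      calc y = f y := (hfix y (hS hy)).symm
        _ ≤ f z := hmono (hz.1 y hy)
    have : f z = z := hz.2 (f z) hub (hreg z)
    exact ⟨z, this⟩
end

section
/- Let L be a finite meet semi-lattice. For a, b ∈ L with b ≤ a, define e_{a,b} : L → L by e_{a,b}(x) = x ∧ b if x ≤ a and e_{a,b}(x) = x otherwise; each e_{a,b} is an element of OR(L). Then the family {e_{a,b} : (a,b) a cover of L, i.e., b < a with no c satisfying b < c < a} minimally generates the idempotents of OR(L): every idempotent of OR(L) belongs to the submonoid of OR(L) generated by this family, and for every cover (a,b), the element e_{a,b} does not belong to the submonoid generated by the remaining elements of the family. -/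
/-- The monoid `OR(P)` of order preserving regressive functions on a poset `P`, as a
submonoid of `Function.End P` (functions under composition). -/
def ORMonoid (P : Type*) [PartialOrder P] : Submonoid (Function.End P) where
  carrier := {f : Function.End P | Monotone f ∧ ∀ x : P, f x ≤ x}
  one_mem' := ⟨monotone_id, fun _ => le_rfl⟩
  mul_mem' := fun {f g} hf hg =>
    ⟨hf.1.comp hg.1, fun x => le_trans (hf.2 (g x)) (hg.2 x)⟩

open Classical

/-- For `b ≤ a` in a meet semi-lattice, the function `e_{a,b}` sending `x` to `x ⊓ b`
if `x ≤ a` and to `x` otherwise. -/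
noncomputable def eab {L : Type*} [SemilatticeInf L] (a b : L) : Function.End L :=
  fun x => if x ≤ a then x ⊓ b else x

section Aux

variable {L : Type*} [SemilatticeInf L]

lemma finset_exists_maximal_old {α : Type*} [PartialOrder α] (s : Finset α) (hs : s.Nonempty) :
    ∃ m ∈ s, ∀ x ∈ s, ¬ m < x := by
  obtain ⟨m, hm⟩ := Finset.exists_maximal hs
  exact ⟨m, hm.1, fun x hx hlt => hlt.not_ge (hm.2 hx hlt.le)⟩

lemma eab_of_le {a b x : L} (h : x ≤ a) : eab a b x = x ⊓ b := if_pos h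

lemma eab_of_not_le {a b x : L} (h : ¬ x ≤ a) : eab a b x = x := if_neg h

lemma eab_regressive (a b : L) (x : L) : eab a b x ≤ x := by
  by_cases h : x ≤ a
  · rw [eab_of_le h]; exact inf_le_left
  · rw [eab_of_not_le h]

lemma eab_mem_OR {a b : L} (hba : b ≤ a) : eab a b ∈ ORMonoid L := by
  refine ⟨fun x y hxy => ?_, eab_regressive a b⟩
  by_cases hx : x ≤ a <;> by_cases hy : y ≤ a
  · rw [eab_of_le hx, eab_of_le hy]
    exact inf_le_inf_right _ hxy
  · rw [eab_of_le hx, eab_of_not_le hy]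
    exact le_trans inf_le_left hxy
  · exact absurd (le_trans hxy hy) hx
  · rw [eab_of_not_le hx, eab_of_not_le hy]
    exact hxy

lemma eab_self (a : L) : eab a a = 1 := by
  funext x
  by_cases h : x ≤ a
  · rw [eab_of_le h]; exact inf_eq_left.mpr h
  · exact eab_of_not_le h

/-- Splitting along an intermediate element. -/
lemma eab_split {a b c : L} (hbc : b ≤ c) (hca : c ≤ a) :
    eab a b = eab c b * eab a c := by
  funext x
  show eab a b x = eab c b (eab a c x)
  by_cases h : x ≤ a
  · rw [eab_of_le h, eab_of_le h, eab_of_le (le_trans inf_le_right le_rfl),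
      inf_assoc, inf_eq_right.mpr hbc]
  · have h' : ¬ x ≤ c := fun hxc => h (le_trans hxc hca)
    rw [eab_of_not_le h, eab_of_not_le h, eab_of_not_le h']

variable [Fintype L]

/-- Any `e_{a,b}` with `b ≤ a` is a product of cover ones. -/
lemma eab_mem_closure : ∀ a b : L, b ≤ a →
    eab a b ∈ Submonoid.closure {g : Function.End L | ∃ a b : L, b ⋖ a ∧ g = eab a b} := by
  intro a
  induction a using WellFoundedLT.induction with
  | _ a ih =>
    intro b hba
    rcases eq_or_lt_of_le hba with h | h
    · rw [← h, eab_self]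
      exact Submonoid.one_mem _
    · -- pick c maximal with b ≤ c < a
      obtain ⟨c, hc, hcmax⟩ := finset_exists_maximal_old
        (Finset.univ.filter (fun c => b ≤ c ∧ c < a))
        ⟨b, by simp [h]⟩
      simp only [Finset.mem_filter, Finset.mem_univ, true_and] at hc
      have hcov : c ⋖ a := by
        refine ⟨hc.2, fun d hcd hda => ?_⟩
        exact hcmax d (by simp [le_trans hc.1 hcd.le, hda]) hcd
      rw [eab_split hc.1 hc.2.le]
      exact Submonoid.mul_mem _ (ih c hc.2 b hc.1)
        (Submonoid.subset_closure ⟨a, c, hcov, rfl⟩)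

lemma idem_mem_closure :
    ∀ f : Function.End L, f ∈ ORMonoid L → IsIdempotentElem f →
      f ∈ Submonoid.closure {g : Function.End L | ∃ a b : L, b ⋖ a ∧ g = eab a b} := by
  suffices H : ∀ n : ℕ, ∀ f : Function.End L, f ∈ ORMonoid L → IsIdempotentElem f →
      (Finset.univ.filter (fun x => f x ≠ x)).card = n →
      f ∈ Submonoid.closure {g : Function.End L | ∃ a b : L, b ⋖ a ∧ g = eab a b} by
    exact fun f hf hidem => H _ f hf hidem rfl
  intro n
  induction n using Nat.strong_induction_on with
  | _ n ih =>
    intro f hf hidem hcard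
    set T := Finset.univ.filter (fun x => f x ≠ x) with hT
    by_cases hTne : T.Nonempty
    · obtain ⟨a, haT, hamax⟩ := finset_exists_maximal_old T hTne
      have hfa : f a ≠ a := by simpa [hT] using haT
      have hfale : f a ≤ a := hf.2 a
      -- the modified map
      set g : Function.End L := fun x => if x = a then a else f x with hg
      have hgval : ∀ x, x ≠ a → g x = f x := fun x hx => if_neg hx
      have hga : g a = a := if_pos rfl
      have hfix : ∀ x, a < x → f x = x := by
        intro x hax
        by_contra hfx
        exact hamax x (by simp [hT, hfx]) hax
      have hfnea : ∀ x, x ≠ a → f x ≠ a := by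
        intro x hx hfxa
        exact hfa (by rw [← hfxa]; exact congrFun hidem x)
      have hgmono : Monotone g := by
        intro x y hxy
        by_cases hx : x = a <;> by_cases hy : y = a
        · subst hx; subst hy; exact le_rfl
        · subst hx
          rw [hga, hgval y hy, hfix y (lt_of_le_of_ne hxy (Ne.symm hy))]
          exact le_of_lt (lt_of_le_of_ne hxy (Ne.symm hy))
        · subst hy
          rw [hga, hgval x hx]
          exact le_trans (hf.2 x) hxy
        · rw [hgval x hx, hgval y hy]
          exact hf.1 hxy
      have hgreg : ∀ x, g x ≤ x := by
        intro x
        by_cases hx : x = a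
        · subst hx; rw [hga]
        · rw [hgval x hx]; exact hf.2 x
      have hgOR : g ∈ ORMonoid L := ⟨hgmono, hgreg⟩
      have hgidem : IsIdempotentElem g := by
        funext x
        show g (g x) = g x
        by_cases hx : x = a
        · subst hx; rw [hga, hga]
        · rw [hgval x hx, hgval (f x) (hfnea x hx)]
          exact congrFun hidem x
      have hTg : Finset.univ.filter (fun x => g x ≠ x) = T.erase a := by
        ext x
        by_cases hx : x = a
        · subst hx
          simp [hga]
        · simp [hT, hgval x hx, hx]
      have hcardlt : (Finset.univ.filter (fun x => g x ≠ x)).card < n := by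
        rw [hTg, Finset.card_erase_of_mem haT, hcard]
        have : 0 < n := by
          rw [← hcard]
          exact Finset.card_pos.mpr hTne
        omega
      have hgmem := ih _ hcardlt g hgOR hgidem rfl
      have hsplit : f = eab a (f a) * g := by
        funext x
        show f x = eab a (f a) (g x)
        by_cases hx : x = a
        · subst hx
          rw [hga, eab_of_le le_rfl, inf_eq_right.mpr hfale]
        · rw [hgval x hx]
          by_cases hfx : f x ≤ a
          · rw [eab_of_le hfx, inf_eq_left.mpr ?_]
            calc f x = f (f x) := (congrFun hidem x).symm
            _ ≤ f a := hf.1 hfx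
          · rw [eab_of_not_le hfx]
      rw [hsplit]
      exact Submonoid.mul_mem _ (eab_mem_closure a (f a) hfale) hgmem
    · -- f is the identity
      have : f = 1 := by
        funext x
        by_contra hx
        exact hTne ⟨x, by simp only [hT, Finset.mem_filter, Finset.mem_univ, true_and]; exact hx⟩
      rw [this]
      exact Submonoid.one_mem _

end Aux

/-- Let `L` be a finite meet semi-lattice.  Each `e_{a,b}` (for `b ≤ a`) lies in `OR(L)`, and
the family `{e_{a,b} : (a,b) a cover of L}` minimally generates the idempotents of `OR(L)`:
every idempotent of `OR(L)` lies in the submonoid generated by this family, and no member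
`e_{a,b}` of the family lies in the submonoid generated by the remaining members. -/
theorem eab_minimally_generate_idempotents {L : Type*} [SemilatticeInf L] [Fintype L] :
    (∀ a b : L, b ≤ a → eab a b ∈ ORMonoid L) ∧
    (∀ f : Function.End L, f ∈ ORMonoid L → IsIdempotentElem f →
      f ∈ Submonoid.closure {g : Function.End L | ∃ a b : L, b ⋖ a ∧ g = eab a b}) ∧
    (∀ a b : L, b ⋖ a →
      eab a b ∉ Submonoid.closure
        ({g : Function.End L | ∃ a' b' : L, b' ⋖ a' ∧ g = eab a' b'} \ {eab a b})) := by
  refine ⟨fun a b hba => eab_mem_OR hba, idem_mem_closure, ?_⟩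
  intro a b hab hmem
  -- the invariant
  set P : Function.End L → Prop := fun f =>
    (∀ x, f x ≤ x) ∧ (f a = a ∨ ¬ b ≤ f a ∨ ∃ x, a < x ∧ f x < x) with hP
  have hPe : P (eab a b) := by
    refine Submonoid.closure_induction (motive := fun f _ => P f) ?_ ?_ ?_ hmem
    · -- generators satisfy P
      rintro g ⟨⟨a', b', hcov, rfl⟩, hne⟩
      refine ⟨eab_regressive a' b', ?_⟩
      by_cases haa' : a ≤ a'
      · by_cases hab' : a ≤ b'
        · left
          rw [eab_of_le haa', inf_eq_left.mpr hab']
        · rcases eq_or_lt_of_le haa' with h | h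
          · -- a' = a : then b' is a coatom of a distinct from b, so ¬ b ≤ b'
            subst h
            right; left
            rw [eab_of_le le_rfl, inf_eq_right.mpr hcov.1.le]
            intro hbb'
            rcases eq_or_lt_of_le hbb' with h' | h'
            · exact hne (by rw [← h']; exact Set.mem_singleton _)
            · exact hab.2 h' hcov.1
          · -- a < a' : a' is moved
            right; right
            refine ⟨a', h, ?_⟩
            rw [eab_of_le le_rfl, inf_eq_right.mpr hcov.1.le]
            exact hcov.1
      · left
        exact eab_of_not_le haa'
    · exact ⟨fun x => le_rfl, Or.inl rfl⟩
    · -- closed under multiplication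
      rintro f g - - ⟨hfreg, hf⟩ ⟨hgreg, hg⟩
      refine ⟨fun x => le_trans (hfreg (g x)) (hgreg x), ?_⟩
      rcases hg with hg | hg | ⟨x, hax, hgx⟩
      · rcases hf with hf | hf | ⟨x, hax, hfx⟩
        · left; show f (g a) = a; rw [hg, hf]
        · right; left; show ¬ b ≤ f (g a); rwa [hg]
        · right; right
          refine ⟨x, hax, ?_⟩
          show f (g x) < x
          rcases lt_or_eq_of_le (hgreg x) with h | h
          · exact lt_of_le_of_lt (hfreg (g x)) h
          · rwa [h]
      · right; left
        intro hble
        exact hg (le_trans hble (hfreg (g a)))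
      · right; right
        exact ⟨x, hax, lt_of_le_of_lt (hfreg (g x)) hgx⟩
  -- but eab a b violates P
  rcases hPe.2 with h | h | ⟨x, hax, hx⟩
  · rw [eab_of_le le_rfl, inf_eq_right.mpr hab.1.le] at h
    exact hab.1.ne h
  · exact h (by rw [eab_of_le le_rfl, inf_eq_right.mpr hab.1.le])
  · rw [eab_of_not_le (not_le_of_gt hax)] at hx
    exact lt_irrefl x hx
end

section
/- Let K be a field, N ≥ 1, and let NDPF_N be the monoid, under composition, of functions f : {1,…,N} → {1,…,N} that are order preserving and regressive (f(x) ≤ x). For 1 ≤ i ≤ N−1 let π_i ∈ NDPF_N be defined by π_i(i+1) = i and π_i(j) = j for j ≠ i+1. For each subset D ⊆ {1,…,N−1}, define in MonoidAlgebra K NDPF_N the element C_D := (∏_{i ∉ D} (1 − π_i)) · (∏_{i ∈ D} π_i), where the first product is taken over i ∉ D in increasing order of i and the second over i ∈ D in decreasing order of i. Then the family {C_D : D ⊆ {1,…,N−1}} is a complete set of 2^{N−1} nonzero orthogonal idempotents: C_D ≠ 0 and C_D² = C_D for all D, C_D · C_{D'} = 0 whenever D ≠ D', and Σ_{D ⊆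 {1,…,N−1}} C_D = 1. -/
/-- The set `{1, …, N}` as a linearly ordered type. -/
abbrev IccN (N : ℕ) := {k : ℕ // k ∈ Finset.Icc 1 N}

/-- `NDPF N`: the nondecreasing parking functions, i.e. order preserving regressive functions
on `{1, …, N}`. -/
abbrev NDPF (N : ℕ) := {f : IccN N → IccN N // Monotone f ∧ ∀ x : IccN N, f x ≤ x}

/-- Monoid structure on `NDPF N` under composition, with the product `f * g` acting on the
right: `x.(f * g) = (x.f).g`, i.e. `f * g = g ∘ f`. -/
instance (N : ℕ) : Monoid (NDPF N) where
  one := ⟨id, monotone_id, fun _ => le_rfl⟩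
  mul f g := ⟨g.1 ∘ f.1, g.2.1.comp f.2.1,
    fun x => le_trans (g.2.2 (f.1 x)) (f.2.2 x)⟩
  mul_assoc _ _ _ := Subtype.ext rfl
  one_mul _ := Subtype.ext rfl
  mul_one _ := Subtype.ext rfl

/-- The underlying function of the generator `π_i` (for `1 ≤ i ≤ N - 1`): it sends `i + 1`
to `i` and fixes everything else. -/
def piFun (N i : ℕ) : IccN N → IccN N := fun j =>
  if h : (j : ℕ) = i + 1 ∧ 1 ≤ i ∧ i ≤ N - 1 then
    ⟨i, Finset.mem_Icc.mpr ⟨h.2.1, le_trans h.2.2 (Nat.sub_le N 1)⟩⟩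
  else j

lemma piFun_coe (N i : ℕ) (j : IccN N) :
    ((piFun N i j : IccN N) : ℕ)
      = if (j : ℕ) = i + 1 ∧ 1 ≤ i ∧ i ≤ N - 1 then i else (j : ℕ) := by
  unfold piFun
  split_ifs with h <;> rfl

lemma piFun_monotone (N i : ℕ) : Monotone (piFun N i) := by
  intro a b hab
  have hab' : (a : ℕ) ≤ (b : ℕ) := hab
  refine Subtype.coe_le_coe.mp ?_
  rw [piFun_coe, piFun_coe]
  split_ifs with ha hb hb <;> omega

lemma piFun_regressive (N i : ℕ) (x : IccN N) : piFun N i x ≤ x := by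
  refine Subtype.coe_le_coe.mp ?_
  rw [piFun_coe]
  split_ifs with h <;> omega

/-- The generator `π_i` of `NDPF N`, defined by `π_i (i+1) = i` and `π_i j = j` for
`j ≠ i + 1` (for `1 ≤ i ≤ N - 1`). -/
def piGen (N i : ℕ) : NDPF N := ⟨piFun N i, piFun_monotone N i, piFun_regressive N i⟩

namespace NDPFLemmas

variable {N : ℕ}

lemma mul_apply (f g : NDPF N) (x : IccN N) : (f * g).1 x = g.1 (f.1 x) := rfl

lemma one_apply (x : IccN N) : (1 : NDPF N).1 x = x := rfl

lemma regressive (f : NDPF N) (x : IccN N) : ((f.1 x : ℕ)) ≤ x := f.2.2 x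

/-- the monoid element given by a word in the generators, applied left-to-right :
`wordOf (a :: l) = π_a * wordOf l`, acting as: apply `π_a` first. -/
def wordOf (N : ℕ) (l : List ℕ) : NDPF N := (l.map (piGen N)).prod

@[simp] lemma wordOf_nil : wordOf N [] = 1 := rfl

@[simp] lemma wordOf_cons (a : ℕ) (l : List ℕ) :
    wordOf N (a :: l) = piGen N a * wordOf N l := by
  simp [wordOf]

lemma piGen_apply_of_ne (i : ℕ) (x : IccN N) (hx : (x : ℕ) ≠ i + 1) :
    (piGen N i).1 x = x := by
  apply Subtype.ext
  show ((piFun N i x : IccN N) : ℕ) = x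
  rw [piFun_coe]
  split_ifs with h
  · exact absurd h.1 hx
  · rfl

lemma piGen_apply_coe (i : ℕ) (x : IccN N) :
    ((piGen N i).1 x : ℕ) = if (x : ℕ) = i + 1 ∧ 1 ≤ i ∧ i ≤ N - 1 then i else (x : ℕ) :=
  piFun_coe N i x

/-- F2 : anything strictly between `wordOf l x` and `x` is a letter of `l`. -/
lemma between_mem (l : List ℕ) (x : IccN N) (y : ℕ)
    (h1 : ((wordOf N l).1 x : ℕ) ≤ y) (h2 : y < (x : ℕ)) : y ∈ l := by
  induction l generalizing x with
  | nil =>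
    simp only [wordOf_nil, one_apply] at h1
    omega
  | cons a l ih =>
    rw [wordOf_cons, mul_apply] at h1
    by_cases hc : (x : ℕ) = a + 1 ∧ 1 ≤ a ∧ a ≤ N - 1
    · have hax : ((piGen N a).1 x : ℕ) = a := by rw [piGen_apply_coe, if_pos hc]
      have hxa : (x : ℕ) = a + 1 := hc.1
      rcases Nat.lt_or_ge y a with hy | hy
      · -- y < a : use ih at the point π_a x
        right
        refine ih ((piGen N a).1 x) ?_ ?_
        · exact h1
        · omega
      · -- y = a
        have : y = a := by omega
        subst this
        exact List.mem_cons_self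
    · have hax : (piGen N a).1 x = x := by
        apply Subtype.ext
        rw [piGen_apply_coe, if_neg hc]
      rw [hax] at h1
      exact List.mem_cons_of_mem _ (ih x h1 h2)

/-- F3 : for a strictly descending word with letters in `[1, N-1]`,
the value never equals `i+1` for a letter `i`. -/
lemma descending_ne_succ (l : List ℕ) (hs : l.Pairwise (· > ·))
    (hl : ∀ a ∈ l, 1 ≤ a ∧ a ≤ N - 1) (i : ℕ) (hi : i ∈ l) (x : IccN N) :
    ((wordOf N l).1 x : ℕ) ≠ i + 1 := by
  induction l generalizing x with
  | nil => simp at hi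
  | cons a l ih =>
    rw [List.pairwise_cons] at hs
    rw [wordOf_cons, mul_apply]
    rcases List.mem_cons.mp hi with hia | hi'
    · -- i = a
      subst hia
      intro heq
      set y := (piGen N i).1 x with hy
      have hyx : (y : ℕ) ≤ x := regressive _ _
      have hreg : ((wordOf N l).1 y : ℕ) ≤ y := regressive _ _
      have hya : (y : ℕ) ≥ i + 1 := by omega
      have hax : (y : ℕ) = (x : ℕ) := by
        rw [hy, piGen_apply_coe]
        split_ifs with h
        · rw [hy, piGen_apply_coe, if_pos h] at hya; omega
        · rfl
      by_cases hcase : ((wordOf N l).1 y : ℕ) = (y : ℕ)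
      · have hA := hl i (List.mem_cons_self)
        have hxi : (x : ℕ) = i + 1 := by omega
        have : (y : ℕ) = i := by
          rw [hy, piGen_apply_coe, if_pos ⟨hxi, hA.1, hA.2⟩]
        omega
      · have hmem : i + 1 ∈ l := by
          refine between_mem l y (i+1) (by omega) (by omega)
        have := hs.1 _ hmem
        omega
    · exact ih hs.2 (fun b hb => hl b (List.mem_cons_of_mem _ hb)) hi' ((piGen N a).1 x)

/-- F4 : if `x - 1` is not a letter, `x` is fixed. -/
lemma fixed_of_pred_not_mem (l : List ℕ) (x : IccN N) (hx : ¬((x : ℕ) - 1 ∈ l)) :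
    (wordOf N l).1 x = x := by
  have hreg : ((wordOf N l).1 x : ℕ) ≤ x := regressive _ _
  have hx1 : 1 ≤ (x : ℕ) := (Finset.mem_Icc.mp x.2).1
  apply Subtype.ext
  by_contra hne
  have hlt : ((wordOf N l).1 x : ℕ) < x := lt_of_le_of_ne hreg hne
  exact hx (between_mem l x ((x : ℕ) - 1) (by omega) (by omega))

/-- RUN : two points with the whole interval between them consisting of letters
(for a descending word within range) have the same image. -/
lemma run_eq (l : List ℕ) (hs : l.Pairwise (· > ·)) (hl : ∀ a ∈ l, 1 ≤ a ∧ a ≤ N - 1)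
    (u c : IccN N) (huc : (u : ℕ) ≤ c)
    (hrun : ∀ y : ℕ, (u : ℕ) ≤ y → y < (c : ℕ) → y ∈ l) :
    (wordOf N l).1 u = (wordOf N l).1 c := by
  set a := ((wordOf N l).1 u : ℕ) with ha
  set b := ((wordOf N l).1 c : ℕ) with hb
  have hau : a ≤ u := regressive _ _
  have hbc : b ≤ c := regressive _ _
  have ha1 : 1 ≤ a := (Finset.mem_Icc.mp ((wordOf N l).1 u).2).1
  have hb1 : 1 ≤ b := (Finset.mem_Icc.mp ((wordOf N l).1 c).2).1
  have hab : a = b := by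
    rcases Nat.lt_trichotomy a b with h | h | h
    · -- a < b : b - 1 is a letter, contradiction with F3 for b
      have hmem : b - 1 ∈ l := by
        by_cases hcase : (u : ℕ) ≤ b - 1
        · exact hrun _ hcase (by omega)
        · exact between_mem l u (b-1) (by omega) (by omega)
      have := descending_ne_succ l hs hl (b-1) hmem c
      rw [← hb] at this
      omega
    · exact h
    · -- b < a : a - 1 is a letter (between b and c), contradiction with F3 for a
      have hmem : a - 1 ∈ l := between_mem l c (a-1) (by omega) (by omega)
      have := descending_ne_succ l hs hl (a-1) hmem u
      rw [← ha] at this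
      omega
  exact Subtype.ext hab

/-- the formula for an ascending word : `x ↦ x - 1` if `x - 1` is a letter, else `x`. -/
lemma ascending_formula (V : List ℕ) (hs : V.Pairwise (· < ·))
    (hV : ∀ v ∈ V, 1 ≤ v ∧ v ≤ N - 1) (x : IccN N) :
    ((wordOf N V).1 x : ℕ) = if ((x : ℕ) - 1) ∈ V then (x : ℕ) - 1 else (x : ℕ) := by
  induction V generalizing x with
  | nil => simp [one_apply]
  | cons v V ih =>
    rw [List.pairwise_cons] at hs
    have hv := hV v (List.mem_cons_self)
    rw [wordOf_cons, mul_apply]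
    by_cases hc : (x : ℕ) = v + 1
    · have hax : ((piGen N v).1 x : ℕ) = v := by
        rw [piGen_apply_coe, if_pos ⟨hc, hv.1, hv.2⟩]
      have h2 : (piGen N v).1 x = ⟨v, Finset.mem_Icc.mpr ⟨hv.1, by omega⟩⟩ :=
        Subtype.ext hax
      rw [h2, ih hs.2 (fun b hb => hV b (List.mem_cons_of_mem _ hb))]
      have hv1 : ¬ (v - 1 ∈ V) := by
        intro hmem
        have := hs.1 _ hmem
        omega
      rw [if_neg hv1]
      have hxv : (x : ℕ) - 1 = v := by omega
      have : (x : ℕ) - 1 ∈ v :: V := List.mem_cons.mpr (Or.inl hxv)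
      rw [if_pos this]
      simp [hxv]
    · have hax : (piGen N v).1 x = x := piGen_apply_of_ne v x hc
      rw [hax, ih hs.2 (fun b hb => hV b (List.mem_cons_of_mem _ hb))]
      have hx1 : 1 ≤ (x : ℕ) := (Finset.mem_Icc.mp x.2).1
      have hne : (x : ℕ) - 1 ≠ v := by omega
      by_cases hmem : (x : ℕ) - 1 ∈ V
      · rw [if_pos hmem, if_pos (List.mem_cons_of_mem _ hmem)]
      · rw [if_neg hmem, if_neg (by simp [hne, hmem])]

end NDPFLemmas

section Part2
namespace NDPFLemmas

variable {N : ℕ}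

/-- The descending word attached to a finset. -/
def descList (D : Finset ℕ) : List ℕ := (D.sort (· ≤ ·)).reverse

lemma descList_sorted (D : Finset ℕ) : (descList D).Pairwise (· > ·) := by
  have := (Finset.sortedLT_sort D).pairwise
  unfold descList
  rw [List.pairwise_reverse]
  exact this

lemma mem_descList {D : Finset ℕ} {x : ℕ} : x ∈ descList D ↔ x ∈ D := by
  unfold descList
  rw [List.mem_reverse, Finset.mem_sort]

/-- The monoid element collapsing runs of `D` downwards. -/
def mW (N : ℕ) (D : Finset ℕ) : NDPF N := wordOf N (descList D)

lemma descent (D E : Finset ℕ) (hDE : D ⊆ E) (hE : E ⊆ Finset.Icc 1 (N-1))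
    (V : List ℕ) (hVs : V.Pairwise (· < ·))
    (hV : ∀ v ∈ V, v ∈ Finset.Icc 1 (N-1) ∧ v ∉ E) :
    ∀ c : ℕ, c ∈ Finset.Icc 1 (N-1) → c ∉ D → (c ∈ E ∨ c ∈ V) →
    ∃ s, s ∈ Finset.Icc 1 (N-1) ∧ s ∉ D ∧
      ∀ (h1 : s ∈ Finset.Icc 1 N) (h2 : s+1 ∈ Finset.Icc 1 N),
        (mW N D * wordOf N V * mW N E).1 ⟨s, h1⟩
          = (mW N D * wordOf N V * mW N E).1 ⟨s+1, h2⟩ := by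
  have hD : D ⊆ Finset.Icc 1 (N-1) := hDE.trans hE
  have hlD : ∀ d ∈ descList D, 1 ≤ d ∧ d ≤ N - 1 := by
    intro d hd
    exact Finset.mem_Icc.mp (hD (mem_descList.mp hd))
  have hlE : ∀ d ∈ descList E, 1 ≤ d ∧ d ≤ N - 1 := by
    intro d hd
    exact Finset.mem_Icc.mp (hE (mem_descList.mp hd))
  have hVr : ∀ v ∈ V, 1 ≤ v ∧ v ≤ N - 1 := fun v hv => Finset.mem_Icc.mp (hV v hv).1
  intro c
  induction c using Nat.strong_induction_on with
  | _ c ih =>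
  intro hc hcD hcEV
  obtain ⟨hc1, hc2⟩ := Finset.mem_Icc.mp hc
  have hcN : c ∈ Finset.Icc 1 N := Finset.mem_Icc.mpr ⟨hc1, by omega⟩
  set cx : IccN N := ⟨c, hcN⟩ with hcx
  set ax : IccN N := (mW N D).1 cx with hax
  set a : ℕ := (ax : ℕ) with ha
  have hac : a ≤ c := regressive _ _
  have ha1 : 1 ≤ a := (Finset.mem_Icc.mp ax.2).1
  have hF2 : ∀ y : ℕ, a ≤ y → y < c → y ∈ D := fun y h1 h2 =>
    mem_descList.mp (between_mem _ cx y h1 h2)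
  have hF3 : ∀ d ∈ D, a ≠ d + 1 := fun d hd =>
    descending_ne_succ _ (descList_sorted D) hlD d (mem_descList.mpr hd) cx
  have haD : ¬ (a - 1 ∈ D) := by
    intro hmem
    exact hF3 _ hmem (by omega)
  by_cases hv : a - 1 ∈ V
  · -- recurse at a - 1
    have hbounds := (hV _ hv).1
    obtain ⟨hb1, hb2⟩ := Finset.mem_Icc.mp hbounds
    exact ih (a-1) (by omega) hbounds haD (Or.inr hv)
  · -- succeed with s = c
    refine ⟨c, hc, hcD, ?_⟩
    intro h1 h2
    have hmemN : a ∈ Finset.Icc 1 N := Finset.mem_Icc.mpr ⟨ha1, by omega⟩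
    have haxeq : ax = ⟨a, hmemN⟩ := Subtype.ext rfl
    rw [mul_apply, mul_apply, mul_apply, mul_apply]
    have e1 : (mW N D).1 ⟨c, h1⟩ = ax := by
      rw [hax]
    -- π-word V fixes a
    have e2 : (wordOf N V).1 ax = ax := by
      apply Subtype.ext
      rw [ascending_formula V hVs hVr]
      rw [if_neg (show ¬((ax : ℕ) - 1 ∈ V) from hv)]
    -- c+1 fixed by mW D
    have e3 : (mW N D).1 ⟨c+1, h2⟩ = ⟨c+1, h2⟩ := by
      apply fixed_of_pred_not_mem
      simp only [Nat.add_sub_cancel]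
      exact fun h => hcD (mem_descList.mp h)
    rw [e1, e2, e3]
    by_cases hcV : c ∈ V
    · -- w_V sends c+1 down to c
      have e4 : (wordOf N V).1 ⟨c+1, h2⟩ = cx := by
        apply Subtype.ext
        rw [ascending_formula V hVs hVr]
        simp only [Nat.add_sub_cancel]
        rw [if_pos hcV]
      rw [e4]
      apply run_eq _ (descList_sorted E) hlE ax cx hac
      intro y hy1 hy2
      exact mem_descList.mpr (hDE (hF2 y hy1 hy2))
    · have hcE : c ∈ E := hcEV.resolve_right hcV
      have e4 : (wordOf N V).1 ⟨c+1, h2⟩ = ⟨c+1, h2⟩ := by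
        apply Subtype.ext
        rw [ascending_formula V hVs hVr]
        simp only [Nat.add_sub_cancel]
        rw [if_neg hcV]
      rw [e4]
      apply run_eq _ (descList_sorted E) hlE ax ⟨c+1, h2⟩ (by simp only; omega)
      intro y hy1 hy2
      simp only at hy2
      rcases Nat.lt_or_ge y c with h | h
      · exact mem_descList.mpr (hDE (hF2 y hy1 h))
      · have : y = c := by omega
        subst this
        exact mem_descList.mpr hcE

end NDPFLemmas
end Part2

section Part3
namespace NDPFLemmas

variable {N : ℕ} (K : Type*) [Field K]

/-- generator as an element of the monoid algebra -/
noncomputable def XA (N : ℕ) (i : ℕ) : MonoidAlgebra K (NDPF N) :=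
  MonoidAlgebra.of K (NDPF N) (piGen N i)

/-- product of the `1 - π_i` along a list -/
noncomputable def Lprod (N : ℕ) (l : List ℕ) : MonoidAlgebra K (NDPF N) :=
  (l.map (fun i => (1 : MonoidAlgebra K (NDPF N)) - XA K N i)).prod

@[simp] lemma Lprod_nil : Lprod K N [] = 1 := rfl

lemma Lprod_cons (a : ℕ) (l : List ℕ) :
    Lprod K N (a :: l) = (1 - XA K N a) * Lprod K N l := by
  simp [Lprod]

lemma Lprod_append_singleton (l : List ℕ) (a : ℕ) :
    Lprod K N (l ++ [a]) = Lprod K N l * (1 - XA K N a) := by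
  simp [Lprod]

lemma piGen_cases (i : ℕ) (x : IccN N) :
    (piGen N i).1 x = x ∨
      ((x : ℕ) = i + 1 ∧ 1 ≤ i ∧ i ≤ N - 1 ∧ ((piGen N i).1 x : ℕ) = i) := by
  by_cases h : (x : ℕ) = i + 1 ∧ 1 ≤ i ∧ i ≤ N - 1
  · right
    refine ⟨h.1, h.2.1, h.2.2, ?_⟩
    rw [piGen_apply_coe, if_pos h]
  · left
    apply Subtype.ext
    rw [piGen_apply_coe, if_neg h]

/-- `of g * (1 - X t) * P = of g * P - of (g * π_t) * P` building block -/
lemma of_mul_one_sub (g : NDPF N) (t : ℕ) :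
    MonoidAlgebra.of K (NDPF N) g * (1 - XA K N t)
      = MonoidAlgebra.of K (NDPF N) g - MonoidAlgebra.of K (NDPF N) (g * piGen N t) := by
  rw [mul_sub, mul_one, map_mul]
  rfl

lemma one_sub_mul_of (h : NDPF N) (t : ℕ) :
    (1 - XA K N t) * MonoidAlgebra.of K (NDPF N) h
      = MonoidAlgebra.of K (NDPF N) h - MonoidAlgebra.of K (NDPF N) (piGen N t * h) := by
  rw [sub_mul, one_mul, map_mul]
  rfl

/-- Kill lemma (right): a monoid element never taking value `i+1` kills the
increasing product of `1 - π` if `i` is among its letters. -/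
lemma kill_right (i : ℕ) : ∀ (l : List ℕ), l.Pairwise (· < ·) → i ∈ l →
    ∀ g : NDPF N, (∀ x, ((g.1 x : ℕ)) ≠ i + 1) →
    MonoidAlgebra.of K (NDPF N) g * Lprod K N l = 0 := by
  intro l
  induction l with
  | nil => intro _ hi; simp at hi
  | cons t l ih =>
    intro hs hi g hg
    rw [List.pairwise_cons] at hs
    rw [Lprod_cons, ← mul_assoc, of_mul_one_sub]
    by_cases hti : t = i
    · subst hti
      have : g * piGen N t = g := by
        apply Subtype.ext
        funext x
        show (piGen N t).1 (g.1 x) = g.1 x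
        exact piGen_apply_of_ne t (g.1 x) (hg x)
      rw [this, sub_self, zero_mul]
    · have hil : i ∈ l := (List.mem_cons.mp hi).resolve_left (fun h => hti h.symm)
      have hti' : t < i := hs.1 i hil
      rw [sub_mul]
      rw [ih hs.2 hil g hg, ih hs.2 hil (g * piGen N t) ?_, sub_self]
      intro x
      show ((piGen N t).1 (g.1 x) : ℕ) ≠ i + 1
      rcases piGen_cases t (g.1 x) with hfix | ⟨_, _, _, hval⟩
      · rw [hfix]; exact hg x
      · omega

/-- auxiliary for kill_left : `(1 - π_s) * Lprod l * of h = 0`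
when all letters of `l` exceed `s` and `π_s * h = h`. -/
lemma kill_left_aux (s : ℕ) (l : List ℕ) (hgt : ∀ t ∈ l, s < t) :
    ∀ h : NDPF N, piGen N s * h = h →
    (1 - XA K N s) * (Lprod K N l * MonoidAlgebra.of K (NDPF N) h) = 0 := by
  induction l using List.reverseRecOn with
  | nil =>
    intro h hh
    rw [Lprod_nil, one_mul, one_sub_mul_of, hh, sub_self]
  | append_singleton l a ih =>
    intro h hh
    have ha : s < a := hgt a (by simp)
    rw [Lprod_append_singleton, mul_assoc, one_sub_mul_of, mul_sub, mul_sub]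
    have e1 := ih (fun t ht => hgt t (by simp [ht])) h hh
    have e2 := ih (fun t ht => hgt t (by simp [ht])) (piGen N a * h) ?_
    · rw [e1, e2, sub_self]
    · -- π_s * (π_a * h) = π_a * h for s < a, given π_s * h = h
      apply Subtype.ext
      funext x
      show (piGen N a * h).1 ((piGen N s).1 x) = (piGen N a * h).1 x
      rcases piGen_cases s x with hfix | ⟨hx, hs1, hs2, hval⟩
      · rw [hfix]
      · rw [mul_apply, mul_apply]
        have hy : (piGen N a).1 ((piGen N s).1 x) = (piGen N s).1 x :=
          piGen_apply_of_ne a _ (by omega)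
        have hx' : (piGen N a).1 x = x := piGen_apply_of_ne a x (by omega)
        rw [hy, hx']
        have := congrFun (congrArg Subtype.val hh) x
        rw [mul_apply] at this
        exact this

/-- Kill lemma (left): if `π_s * h = h` and `s` is a letter of the sorted list `l`,
then `Lprod l * of h = 0`. -/
lemma kill_left (s : ℕ) : ∀ (l : List ℕ), l.Pairwise (· < ·) → s ∈ l →
    ∀ h : NDPF N, piGen N s * h = h →
    Lprod K N l * MonoidAlgebra.of K (NDPF N) h = 0 := by
  intro l
  induction l with
  | nil => intro _ hs; simp at hs
  | cons t l ih =>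
    intro hsort hs h hh
    rw [List.pairwise_cons] at hsort
    rw [Lprod_cons, mul_assoc]
    by_cases hts : t = s
    · subst hts
      exact kill_left_aux K t l (fun u hu => hsort.1 u hu) h hh
    · have hsl : s ∈ l := (List.mem_cons.mp hs).resolve_left (fun h => hts h.symm)
      rw [ih hsort.2 hsl h hh, mul_zero]

end NDPFLemmas
end Part3

section Part4
namespace NDPFLemmas

variable {N : ℕ} (K : Type*) [Field K]

/-- the sorted list of the complement of `D` in `{1, …, N-1}`. -/
def sortC (N : ℕ) (D : Finset ℕ) : List ℕ := ((Finset.Icc 1 (N-1)) \ D).sort (· ≤ ·)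

lemma sortC_sorted (D : Finset ℕ) : (sortC N D).Pairwise (· < ·) :=
  (Finset.sortedLT_sort _).pairwise

lemma mem_sortC {D : Finset ℕ} {x : ℕ} :
    x ∈ sortC N D ↔ x ∈ Finset.Icc 1 (N-1) ∧ x ∉ D := by
  rw [sortC, Finset.mem_sort, Finset.mem_sdiff]

/-- the generic form of `C_D`. -/
noncomputable def CDg (K : Type*) [Field K] (N : ℕ) (D : Finset ℕ) :
    MonoidAlgebra K (NDPF N) :=
  Lprod K N (sortC N D) * MonoidAlgebra.of K (NDPF N) (mW N D)

lemma core (D E : Finset ℕ) (hDE : D ⊆ E) (hE : E ⊆ Finset.Icc 1 (N-1))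
    (i0 : ℕ) (hi0E : i0 ∈ E) (hi0D : i0 ∉ D) :
    ∀ (l : List ℕ), (∀ t ∈ l, t ∈ Finset.Icc 1 (N-1) ∧ t ∉ E) → l.Pairwise (· < ·) →
    ∀ (W : List ℕ), W.Pairwise (· < ·) → (∀ w ∈ W, w ∈ Finset.Icc 1 (N-1) ∧ w ∉ E) →
    (∀ t ∈ l, ∀ w ∈ W, t < w) →
    CDg K N D *
      (Lprod K N l * MonoidAlgebra.of K (NDPF N) (wordOf N W * mW N E)) = 0 := by
  intro l
  induction l using List.reverseRecOn with
  | nil =>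
    intro _ _ W hW hWm _
    rw [Lprod_nil, one_mul, CDg, mul_assoc, ← map_mul]
    obtain ⟨s, hsIcc, hsD, heq⟩ :=
      descent D E hDE hE W hW (fun v hv => ⟨(hWm v hv).1, (hWm v hv).2⟩) i0
        (hE hi0E) hi0D (Or.inl hi0E)
    obtain ⟨hs1, hs2⟩ := Finset.mem_Icc.mp hsIcc
    have hsN : s ∈ Finset.Icc 1 N := Finset.mem_Icc.mpr ⟨hs1, by omega⟩
    have hsN' : s + 1 ∈ Finset.Icc 1 N := Finset.mem_Icc.mpr ⟨by omega, by omega⟩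
    apply kill_left K s (sortC N D) (sortC_sorted D) (mem_sortC.mpr ⟨hsIcc, hsD⟩)
    -- π_s * (m_D * (w_W * m_E)) = m_D * (w_W * m_E)
    apply Subtype.ext
    funext x
    show (mW N D * (wordOf N W * mW N E)).1 ((piGen N s).1 x)
        = (mW N D * (wordOf N W * mW N E)).1 x
    rcases piGen_cases s x with hfix | ⟨hx, _, _, hval⟩
    · rw [hfix]
    · have h1 : (piGen N s).1 x = ⟨s, hsN⟩ := Subtype.ext hval
      have h2 : x = ⟨s+1, hsN'⟩ := Subtype.ext hx
      rw [h1, h2]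
      have := heq hsN hsN'
      rw [← mul_assoc]
      exact this
  | append_singleton l a ih =>
    intro hmem hsort W hW hWm hlW
    have hsplit := (List.pairwise_append.mp hsort)
    have hal : ∀ t ∈ l, t < a := fun t ht => hsplit.2.2 t ht a (by simp)
    have haW : ∀ w ∈ W, a < w := fun w hw => hlW a (by simp) w hw
    have haI := hmem a (by simp)
    rw [Lprod_append_singleton, mul_assoc, one_sub_mul_of, mul_sub, mul_sub]
    have e1 := ih (fun t ht => hmem t (by simp [ht])) hsplit.1 W hW hWm
      (fun t ht w hw => hlW t (by simp [ht]) w hw)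
    have e2 := ih (fun t ht => hmem t (by simp [ht])) hsplit.1 (a :: W)
      (List.pairwise_cons.mpr ⟨haW, hW⟩)
      (fun w hw => by
        rcases List.mem_cons.mp hw with rfl | hw'
        · exact haI
        · exact hWm w hw')
      (fun t ht w hw => by
        rcases List.mem_cons.mp hw with rfl | hw'
        · exact hal t ht
        · exact lt_trans (hal t ht) (haW w hw'))
    rw [e1, show piGen N a * (wordOf N W * mW N E) = wordOf N (a :: W) * mW N E by
      rw [wordOf_cons, mul_assoc], e2, sub_zero]

/-- Orthogonality. -/
lemma orth (D E : Finset ℕ) (hD : D ⊆ Finset.Icc 1 (N-1)) (hE : E ⊆ Finset.Icc 1 (N-1))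
    (hne : D ≠ E) : CDg K N D * CDg K N E = 0 := by
  by_cases hsub : D ⊆ E
  · -- case D ⊊ E
    have : ∃ i0 ∈ E, i0 ∉ D := by
      by_contra hcon
      push_neg at hcon
      exact hne (Finset.Subset.antisymm hsub hcon)
    obtain ⟨i0, hi0E, hi0D⟩ := this
    have := core K D E hsub hE i0 hi0E hi0D (sortC N E)
      (fun t ht => mem_sortC.mp ht) (sortC_sorted E) [] (by simp) (by simp) (by simp)
    rw [wordOf_nil, one_mul] at this
    rw [show CDg K N E = Lprod K N (sortC N E) * MonoidAlgebra.of K (NDPF N) (mW N E) from rfl]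
    rw [← mul_assoc] at this ⊢
    exact this
  · -- case D \ E nonempty
    obtain ⟨i, hiD, hiE⟩ := Finset.not_subset.mp hsub
    have hkill : MonoidAlgebra.of K (NDPF N) (mW N D) * Lprod K N (sortC N E) = 0 := by
      apply kill_right K i (sortC N E) (sortC_sorted E)
        (mem_sortC.mpr ⟨hD hiD, hiE⟩)
      exact fun x => descending_ne_succ (descList D) (descList_sorted D)
        (fun d hd => Finset.mem_Icc.mp (hD (mem_descList.mp hd))) i
        (mem_descList.mpr hiD) x
    show (Lprod K N (sortC N D) * MonoidAlgebra.of K (NDPF N) (mW N D)) *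
      (Lprod K N (sortC N E) * MonoidAlgebra.of K (NDPF N) (mW N E)) = 0
    rw [mul_assoc, ← mul_assoc (MonoidAlgebra.of K (NDPF N) (mW N D)), hkill,
      zero_mul, mul_zero]

end NDPFLemmas
end Part4

section Part5
namespace NDPFLemmas

variable {N : ℕ} (K : Type*) [Field K]

lemma sort_insert_max (S : Finset ℕ) (m : ℕ) (hmax : ∀ x ∈ S, x < m) (hm : m ∉ S) :
    (insert m S).sort (· ≤ ·) = S.sort (· ≤ ·) ++ [m] := by
  refine List.Perm.eq_of_pairwise' (r := (· ≤ ·)) ?_ ?_ ?_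
  rotate_left 2
  · refine ((Finset.sort_perm_toList _ _).trans ((Finset.toList_insert hm).trans ?_))
    refine (List.Perm.cons _ (Finset.sort_perm_toList S (· ≤ ·)).symm).trans ?_
    exact (List.perm_append_singleton _ _).symm
  · exact Finset.pairwise_sort _ _
  · rw [List.pairwise_append]
    refine ⟨Finset.pairwise_sort _ _, List.pairwise_singleton _ _, ?_⟩
    intro x hx y hy
    rw [List.mem_singleton] at hy
    subst hy
    exact le_of_lt (hmax x (Finset.mem_sort (α := ℕ) (· ≤ ·) |>.mp hx))

/-- generic `C_D` with ambient set `A`. -/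
noncomputable def CDA (K : Type*) [Field K] (N : ℕ) (A D : Finset ℕ) :
    MonoidAlgebra K (NDPF N) :=
  Lprod K N ((A \ D).sort (· ≤ ·)) * MonoidAlgebra.of K (NDPF N) (mW N D)

lemma sum_CDA : ∀ A : Finset ℕ, ∑ D ∈ A.powerset, CDA K N A D = 1 := by
  intro A
  induction A using Finset.strongInduction with
  | _ A ih =>
  rcases Finset.eq_empty_or_nonempty A with rfl | hA
  · rw [Finset.powerset_empty, Finset.sum_singleton]
    unfold CDA mW descList
    rw [Finset.sdiff_empty, Finset.sort_empty]
    simp [wordOf, Lprod, MonoidAlgebra.one_def]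
  · set m := A.max' hA with hm
    set A' := A.erase m with hA'
    have hmA' : m ∉ A' := Finset.notMem_erase _ _
    have hins : A = insert m A' := (Finset.insert_erase (A.max'_mem hA)).symm
    have hlt : ∀ x ∈ A', x < m := by
      intro x hx
      have h1 := Finset.mem_of_mem_erase hx
      have h2 := Finset.ne_of_mem_erase hx
      exact lt_of_le_of_ne (A.le_max' x h1) h2
    rw [hins, Finset.sum_powerset_insert hmA', ← Finset.sum_add_distrib]
    have hstep : ∀ D ∈ A'.powerset,
        CDA K N (insert m A') D + CDA K N (insert m A') (insert m D) = CDA K N A' D := by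
      intro D hD
      have hDA' : D ⊆ A' := Finset.mem_powerset.mp hD
      have hmD : m ∉ D := fun h => hmA' (hDA' h)
      have e1 : (insert m A') \ D = insert m (A' \ D) := by
        ext x
        simp only [Finset.mem_sdiff, Finset.mem_insert]
        constructor
        · rintro ⟨h1 | h1, h2⟩
          · exact Or.inl h1
          · exact Or.inr ⟨h1, h2⟩
        · rintro (rfl | ⟨h1, h2⟩)
          · exact ⟨Or.inl rfl, hmD⟩
          · exact ⟨Or.inr h1, h2⟩
      have e2 : (insert m A') \ (insert m D) = A' \ D := by
        ext x
        simp only [Finset.mem_sdiff, Finset.mem_insert]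
        constructor
        · rintro ⟨h1 | h1, h2⟩
          · exact absurd (Or.inl h1) h2
          · push_neg at h2
            exact ⟨h1, h2.2⟩
        · rintro ⟨h1, h2⟩
          refine ⟨Or.inr h1, ?_⟩
          rintro (rfl | hc)
          · exact hmA' h1
          · exact h2 hc
      have e3 : ((insert m (A' \ D)).sort (· ≤ ·)) = (A' \ D).sort (· ≤ ·) ++ [m] := by
        apply sort_insert_max
        · intro x hx
          exact hlt x (Finset.mem_sdiff.mp hx).1
        · intro hx
          exact hmA' (Finset.mem_sdiff.mp hx).1
      have e4 : mW N (insert m D) = piGen N m * mW N D := by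
        unfold mW descList
        rw [sort_insert_max D m (fun x hx => hlt x (hDA' hx)) hmD,
          List.reverse_append]
        simp [wordOf]
      unfold CDA
      rw [e1, e2, e3, e4, Lprod_append_singleton, map_mul, mul_assoc]
      rw [← mul_add, ← add_mul,
        show (MonoidAlgebra.of K (NDPF N)) (piGen N m) = XA K N m from rfl,
        sub_add_cancel, one_mul]
    rw [Finset.sum_congr rfl hstep]
    exact ih A' (Finset.erase_ssubset (A.max'_mem hA))

end NDPFLemmas
end Part5

section Part6
namespace NDPFLemmas

variable {N : ℕ} (K : Type*) [Field K]

open scoped Classical in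
/-- the character of `K[NDPF N]` attached to `D` : `f ↦ 1` iff every strict descent
of `f` happens at a position of `D`. -/
noncomputable def chiHom (K : Type*) [Field K] (N : ℕ) (D : Finset ℕ) : NDPF N →* K where
  toFun f := if (∀ x : IccN N, ((f.1 x : ℕ)) < (x : ℕ) → ((x : ℕ) - 1) ∈ D) then 1 else 0
  map_one' := by
    show (if (∀ x : IccN N, (((1 : NDPF N).1 x : ℕ)) < (x : ℕ) → ((x : ℕ) - 1) ∈ D)
      then (1:K) else 0) = 1
    rw [if_pos]
    intro x hx
    exact absurd hx (by simp [one_apply])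
  map_mul' f g := by
    have key : (∀ x : IccN N, (((f*g).1 x : ℕ)) < (x : ℕ) → ((x : ℕ) - 1) ∈ D)
        ↔ (∀ x : IccN N, ((f.1 x : ℕ)) < (x : ℕ) → ((x : ℕ) - 1) ∈ D)
          ∧ (∀ x : IccN N, ((g.1 x : ℕ)) < (x : ℕ) → ((x : ℕ) - 1) ∈ D) := by
      constructor
      · intro h
        constructor
        · intro x hx
          apply h x
          rw [mul_apply]
          exact lt_of_le_of_lt (regressive g (f.1 x)) hx
        · intro x hx
          apply h x
          rcases lt_or_eq_of_le (regressive f x) with hf | hf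
          · rw [mul_apply]
            exact lt_of_le_of_lt (regressive g (f.1 x)) hf
          · rw [mul_apply, Subtype.ext hf]
            exact hx
      · rintro ⟨hf, hg⟩ x hx
        rw [mul_apply] at hx
        rcases lt_or_eq_of_le (regressive f x) with h | h
        · exact hf x h
        · rw [Subtype.ext h] at hx
          exact hg x hx
    by_cases h1 : (∀ x : IccN N, ((f.1 x : ℕ)) < (x : ℕ) → ((x : ℕ) - 1) ∈ D) <;>
      by_cases h2 : (∀ x : IccN N, ((g.1 x : ℕ)) < (x : ℕ) → ((x : ℕ) - 1) ∈ D)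
    · rw [if_pos (key.mpr ⟨h1, h2⟩), if_pos h1, if_pos h2, one_mul]
    · rw [if_neg (fun hc => h2 (key.mp hc).2), if_pos h1, if_neg h2, mul_zero]
    · rw [if_neg (fun hc => h1 (key.mp hc).1), if_neg h1, if_pos h2, zero_mul]
    · rw [if_neg (fun hc => h1 (key.mp hc).1), if_neg h1, if_neg h2, zero_mul]

lemma chiHom_piGen_mem (D : Finset ℕ) {d : ℕ} (hd : d ∈ D) :
    chiHom K N D (piGen N d) = 1 := by
  rw [chiHom, MonoidHom.coe_mk, OneHom.coe_mk, if_pos]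
  intro x hx
  rcases piGen_cases d x with hfix | ⟨hx', _, _, _⟩
  · rw [hfix] at hx; omega
  · rw [hx']
    simpa using hd

lemma chiHom_piGen_not_mem (D : Finset ℕ) {s : ℕ} (hs : s ∈ Finset.Icc 1 (N-1))
    (hsD : s ∉ D) : chiHom K N D (piGen N s) = 0 := by
  obtain ⟨h1, h2⟩ := Finset.mem_Icc.mp hs
  rw [chiHom, MonoidHom.coe_mk, OneHom.coe_mk, if_neg]
  push_neg
  have hmem : s + 1 ∈ Finset.Icc 1 N := Finset.mem_Icc.mpr ⟨by omega, by omega⟩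
  refine ⟨⟨s+1, hmem⟩, ?_, ?_⟩
  · rw [piGen_apply_coe, if_pos ⟨rfl, h1, h2⟩]
    show s < s + 1
    omega
  · simpa using hsD

lemma chi_CDg (D : Finset ℕ) (hD : D ⊆ Finset.Icc 1 (N-1)) :
    (MonoidAlgebra.lift K K (NDPF N) (chiHom K N D)) (CDg K N D) = 1 := by
  set Χ := MonoidAlgebra.lift K K (NDPF N) (chiHom K N D) with hΧ
  rw [CDg, map_mul]
  have e1 : Χ (Lprod K N (sortC N D)) = 1 := by
    rw [Lprod, map_list_prod, List.map_map]
    apply List.prod_eq_one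
    intro x hx
    rw [List.mem_map] at hx
    obtain ⟨s, hs, rfl⟩ := hx
    have hsm := mem_sortC.mp hs
    show Χ (1 - XA K N s) = 1
    rw [map_sub, map_one, show XA K N s = MonoidAlgebra.of K (NDPF N) (piGen N s) from rfl,
      hΧ, MonoidAlgebra.lift_of, chiHom_piGen_not_mem K D hsm.1 hsm.2, sub_zero]
  have e2 : Χ (MonoidAlgebra.of K (NDPF N) (mW N D)) = 1 := by
    rw [hΧ, MonoidAlgebra.lift_of, mW, wordOf, map_list_prod, List.map_map]
    apply List.prod_eq_one
    intro x hx
    rw [List.mem_map] at hx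
    obtain ⟨d, hd, rfl⟩ := hx
    exact chiHom_piGen_mem K D (mem_descList.mp hd)
  rw [e1, e2, one_mul]

lemma CDg_ne_zero (D : Finset ℕ) (hD : D ⊆ Finset.Icc 1 (N-1)) :
    CDg K N D ≠ 0 := by
  intro h
  have := chi_CDg K D hD
  rw [h, map_zero] at this
  exact zero_ne_one this

end NDPFLemmas
end Part6

section Part7
namespace NDPFLemmas

variable {N : ℕ} (K : Type*) [Field K]

lemma CD_eq' (D : Finset ℕ) :
    (((((Finset.Icc 1 (N - 1)) \ D).sort (· ≤ ·)).map
      (fun i => (1 : MonoidAlgebra K (NDPF N))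
        - MonoidAlgebra.of K (NDPF N) (piGen N i))).prod *
    (((D.sort (· ≤ ·)).reverse.map
      (fun i => MonoidAlgebra.of K (NDPF N) (piGen N i))).prod))
      = CDg K N D := by
  unfold CDg Lprod mW wordOf descList sortC XA
  rw [map_list_prod, List.map_map]
  rfl

end NDPFLemmas
end Part7



/-- The element `C_D` of the monoid algebra `K[NDPF_N]` attached to a subset
`D ⊆ {1, …, N-1}`: the product of the `1 - π_i` over `i ∉ D` in increasing order, times the
product of the `π_i` over `i ∈ D` in decreasing order. -/
noncomputable def CD (K : Type*) [Field K] (N : ℕ) (D : Finset ℕ) :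
    MonoidAlgebra K (NDPF N) :=
  ((((Finset.Icc 1 (N - 1)) \ D).sort (· ≤ ·)).map
      (fun i => (1 : MonoidAlgebra K (NDPF N))
        - MonoidAlgebra.of K (NDPF N) (piGen N i))).prod *
  (((D.sort (· ≤ ·)).reverse.map
      (fun i => MonoidAlgebra.of K (NDPF N) (piGen N i))).prod)

/-- The family `(C_D)`, for `D` ranging over the `2^{N-1}` subsets of `{1, …, N-1}`, is a
complete set of nonzero orthogonal idempotents of `K[NDPF_N]`. -/
theorem CD_complete_orthogonal_idempotents (K : Type*) [Field K] (N : ℕ) (hN : 1 ≤ N) :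
    (∀ D : Finset ℕ, D ⊆ Finset.Icc 1 (N - 1) →
      CD K N D ≠ 0 ∧ IsIdempotentElem (CD K N D)) ∧
    (∀ D D' : Finset ℕ, D ⊆ Finset.Icc 1 (N - 1) → D' ⊆ Finset.Icc 1 (N - 1) →
      D ≠ D' → CD K N D * CD K N D' = 0) ∧
    (∑ D ∈ (Finset.Icc 1 (N - 1)).powerset, CD K N D) = 1 ∧
    ((Finset.Icc 1 (N - 1)).powerset.card = 2 ^ (N - 1)) := by
  have hCD : ∀ D : Finset ℕ, CD K N D = NDPFLemmas.CDg K N D := by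
    intro D
    rw [CD, NDPFLemmas.CD_eq' K D]
  have horth : ∀ D D' : Finset ℕ, D ⊆ Finset.Icc 1 (N - 1) → D' ⊆ Finset.Icc 1 (N - 1) →
      D ≠ D' → CD K N D * CD K N D' = 0 := by
    intro D D' hD hD' hne
    rw [hCD, hCD]
    exact NDPFLemmas.orth K D D' hD hD' hne
  have hsum : (∑ D ∈ (Finset.Icc 1 (N - 1)).powerset, CD K N D) = 1 := by
    have := NDPFLemmas.sum_CDA (N := N) K (Finset.Icc 1 (N - 1))
    rw [← this]
    apply Finset.sum_congr rfl
    intro D hD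
    rw [hCD]
    rfl
  refine ⟨?_, horth, hsum, ?_⟩
  · intro D hD
    constructor
    · rw [hCD]
      exact NDPFLemmas.CDg_ne_zero K D hD
    · -- idempotency from orthogonality and the sum
      show CD K N D * CD K N D = CD K N D
      conv_rhs => rw [← mul_one (CD K N D), ← hsum]
      rw [Finset.mul_sum]
      symm
      apply Finset.sum_eq_single D
      · intro E hE hne
        exact horth D E hD (Finset.mem_powerset.mp hE) (Ne.symm hne)
      · intro hmem
        exact absurd (Finset.mem_powerset.mpr hD) hmem
  · rw [Finset.card_powerset, Nat.card_Icc]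
    congr 1
end
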